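/- Suppose that for every x ∈ ℝ^n and every k ∈ ℕ there exists a minimizer (ξ_0(x,k),…,ξ_N(x,k); ν_0(x,k),…,ν_{N−1}(x,k)) of V2(x,k) and a constant c > 0 (independent of x, k and ε) such that Γ(x) ≥ c (Σ_{i=0}^{N−1} ‖ξ_i(x,k)‖² + ‖ν_i(x,k)‖²). Then there exists ρ > 0 such that for all x ∈ ℝ^n, all k ∈ ℕ, and all ε > 0, the terminal state x_N(x,k,ε) of a minimizer of V1(x,k,ε) satisfies x_N(x,k,ε)ᵀ Q_N x_N(x,k,ε) ≤ V2(x,k) + ε ρ. -/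

import Mathlib

open Matrix Filter Topology

/-- The predicted state `x_i` of the receding horizon problems:
`x_0 = x` and `x_{i+1} = A_{i+1}(k) x + ∑_{l=0}^{i} B_{i-l}(k) u_l`. -/
def traj {n q : ℕ} (A : ℕ → ℕ → Matrix (Fin n) (Fin n) ℝ)
    (B : ℕ → ℕ → Matrix (Fin n) (Fin q) ℝ) (k : ℕ) (x : Fin n → ℝ)
    (v : ℕ → Fin q → ℝ) : ℕ → Fin n → ℝ
  | 0 => x
  | i + 1 => (A k (i + 1)).mulVec x +
      ∑ l ∈ Finset.range (i + 1), (B k (i - l)).mulVec (v l)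

/-- The terminal cost `ξ_NᵀQ_Nξ_N` of problem V2. -/
noncomputable def cost2 {n q : ℕ} (QN : Matrix (Fin n) (Fin n) ℝ)
    (A : ℕ → ℕ → Matrix (Fin n) (Fin n) ℝ)
    (B : ℕ → ℕ → Matrix (Fin n) (Fin q) ℝ) (N k : ℕ) (x : Fin n → ℝ)
    (v : ℕ → Fin q → ℝ) : ℝ :=
  traj A B k x v N ⬝ᵥ QN.mulVec (traj A B k x v N)

/-- The cost `∑_{i<N} x_iᵀQx_i + u_iᵀRu_i + (Γ(x)/ε)·x_NᵀQ_N x_N` of problem V1. -/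
noncomputable def cost1 {n q : ℕ} (Q : Matrix (Fin n) (Fin n) ℝ)
    (R : Matrix (Fin q) (Fin q) ℝ) (QN : Matrix (Fin n) (Fin n) ℝ)
    (Γ : (Fin n → ℝ) → ℝ)
    (A : ℕ → ℕ → Matrix (Fin n) (Fin n) ℝ)
    (B : ℕ → ℕ → Matrix (Fin n) (Fin q) ℝ) (N k : ℕ) (x : Fin n → ℝ)
    (ε : ℝ) (u : ℕ → Fin q → ℝ) : ℝ :=
  (∑ i ∈ Finset.range N,
    (traj A B k x u i ⬝ᵥ Q.mulVec (traj A B k x u i) + u i ⬝ᵥ R.mulVec (u i)))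
  + (Γ x / ε) * (traj A B k x u N ⬝ᵥ QN.mulVec (traj A B k x u N))

lemma sd_nonneg {m : ℕ} {M : Matrix (Fin m) (Fin m) ℝ} (h : M.PosDef)
    (x : Fin m → ℝ) : 0 ≤ x ⬝ᵥ M.mulVec x := by
  have := h.posSemidef.dotProduct_mulVec_nonneg x
  simpa using this

lemma sd_pos {m : ℕ} {M : Matrix (Fin m) (Fin m) ℝ} (h : M.PosDef)
    {x : Fin m → ℝ} (hx : x ≠ 0) : 0 < x ⬝ᵥ M.mulVec x := by
  have := h.dotProduct_mulVec_pos hx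
  simpa using this

lemma quad_le {m : ℕ} (M : Matrix (Fin m) (Fin m) ℝ) (x : Fin m → ℝ) :
    x ⬝ᵥ M.mulVec x ≤ (∑ i, ∑ j, |M i j|) * ‖x‖ ^ 2 := by
  rw [dotProduct, Finset.sum_mul]
  refine Finset.sum_le_sum fun i _ => ?_
  rw [Matrix.mulVec, dotProduct, Finset.mul_sum, Finset.sum_mul]
  refine Finset.sum_le_sum fun j _ => ?_
  have h1 : |x i| ≤ ‖x‖ := by
    simpa [Real.norm_eq_abs] using norm_le_pi_norm x i
  have h2 : |x j| ≤ ‖x‖ := by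
    simpa [Real.norm_eq_abs] using norm_le_pi_norm x j
  calc x i * (M i j * x j) ≤ |x i * (M i j * x j)| := le_abs_self _
    _ = |x i| * |M i j| * |x j| := by rw [abs_mul, abs_mul]; ring
    _ ≤ ‖x‖ * |M i j| * ‖x‖ := by
        have h3 := (abs_nonneg (x i)).trans h1
        nlinarith [mul_le_mul_of_nonneg_left
          (mul_le_mul h1 h2 (abs_nonneg (x j)) h3) (abs_nonneg (M i j))]
    _ = |M i j| * ‖x‖ ^ 2 := by ring

lemma traj_zero {n q : ℕ} (A : ℕ → ℕ → Matrix (Fin n) (Fin n) ℝ)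
    (B : ℕ → ℕ → Matrix (Fin n) (Fin q) ℝ) (k : ℕ) (u : ℕ → Fin q → ℝ)
    (i : ℕ) (hu : ∀ l < i, u l = 0) : traj A B k 0 u i = 0 := by
  cases i with
  | zero => rfl
  | succ j =>
    show (A k (j + 1)).mulVec 0 +
      ∑ l ∈ Finset.range (j + 1), (B k (j - l)).mulVec (u l) = 0
    rw [Matrix.mulVec_zero, zero_add]
    refine Finset.sum_eq_zero fun l hl => ?_
    rw [hu l (Finset.mem_range.mp hl), Matrix.mulVec_zero]

set_option maxHeartbeats 1600000 in
theorem stmt4 (n q N : ℕ) (hN : 0 < N)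
    (Q : Matrix (Fin n) (Fin n) ℝ) (R : Matrix (Fin q) (Fin q) ℝ)
    (QN : Matrix (Fin n) (Fin n) ℝ)
    (hQ : Q.PosDef) (hR : R.PosDef) (hQN : QN.PosDef)
    (Γ : (Fin n → ℝ) → ℝ) (hΓ : ∀ x, 0 ≤ Γ x)
    (A : ℕ → ℕ → Matrix (Fin n) (Fin n) ℝ)
    (B : ℕ → ℕ → Matrix (Fin n) (Fin q) ℝ)
    (hA0 : ∀ k, A k 0 = 1)
    -- hypothesis: a minimizer of V2 exists whose size is dominated by Γ,
    -- with constant c independent of x, k, ε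
    (hΓbig : ∃ c : ℝ, 0 < c ∧ ∀ (x : Fin n → ℝ) (k : ℕ),
      ∃ v : ℕ → Fin q → ℝ,
        (∀ v' : ℕ → Fin q → ℝ, cost2 QN A B N k x v ≤ cost2 QN A B N k x v') ∧
        c * (∑ i ∈ Finset.range N, (‖traj A B k x v i‖ ^ 2 + ‖v i‖ ^ 2)) ≤ Γ x) :
    ∃ ρ : ℝ, 0 < ρ ∧
      ∀ (x : Fin n → ℝ) (k : ℕ) (ε : ℝ), 0 < ε →
        ∀ u : ℕ → Fin q → ℝ,
          (∀ u' : ℕ → Fin q → ℝ,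
            cost1 Q R QN Γ A B N k x ε u ≤ cost1 Q R QN Γ A B N k x ε u') →
          ∀ v : ℕ → Fin q → ℝ,
            (∀ v' : ℕ → Fin q → ℝ, cost2 QN A B N k x v ≤ cost2 QN A B N k x v') →
            traj A B k x u N ⬝ᵥ QN.mulVec (traj A B k x u N)
              ≤ cost2 QN A B N k x v + ε * ρ := by
  obtain ⟨c, hc, hmin⟩ := hΓbig
  set M : ℝ := (∑ i, ∑ j, |Q i j|) + (∑ i, ∑ j, |R i j|) with hMdef
  have hM0 : 0 ≤ M := by positivity
  refine ⟨M / c + 1, by positivity, ?_⟩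
  intro x k ε hε u hu v hv
  obtain ⟨w, hwmin, hwΓ⟩ := hmin x k
  have hV2 : cost2 QN A B N k x v = cost2 QN A B N k x w :=
    le_antisymm (hv w) (hwmin v)
  set Su : ℝ := ∑ i ∈ Finset.range N,
    (traj A B k x u i ⬝ᵥ Q.mulVec (traj A B k x u i) + u i ⬝ᵥ R.mulVec (u i))
    with hSudef
  set Sw : ℝ := ∑ i ∈ Finset.range N,
    (traj A B k x w i ⬝ᵥ Q.mulVec (traj A B k x w i) + w i ⬝ᵥ R.mulVec (w i))
    with hSwdef
  set Sig : ℝ := ∑ i ∈ Finset.range N, (‖traj A B k x w i‖ ^ 2 + ‖w i‖ ^ 2)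
    with hSigdef
  have hSu0 : 0 ≤ Su :=
    Finset.sum_nonneg fun i _ => add_nonneg (sd_nonneg hQ _) (sd_nonneg hR _)
  have hSw0 : 0 ≤ Sw :=
    Finset.sum_nonneg fun i _ => add_nonneg (sd_nonneg hQ _) (sd_nonneg hR _)
  have hSig0 : 0 ≤ Sig := Finset.sum_nonneg fun i _ => by positivity
  have hSwM : Sw ≤ M * Sig := by
    rw [hSwdef, hSigdef, Finset.mul_sum]
    refine Finset.sum_le_sum fun i _ => ?_
    have h1 := quad_le Q (traj A B k x w i)
    have h2 := quad_le R (w i)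
    have hq1 : (0:ℝ) ≤ ∑ i, ∑ j, |Q i j| := by positivity
    have hq2 : (0:ℝ) ≤ ∑ i, ∑ j, |R i j| := by positivity
    have hn1 : (0:ℝ) ≤ ‖traj A B k x w i‖ ^ 2 := by positivity
    have hn2 : (0:ℝ) ≤ ‖w i‖ ^ 2 := by positivity
    rw [hMdef]
    nlinarith
  by_cases hΓ0 : Γ x = 0
  · -- degenerate case: Γ x = 0 forces x = 0 and a zero minimizer of V1
    have hSigle : c * Sig ≤ 0 := by rw [← hΓ0]; exact hwΓ
    have hSigeq : Sig ≤ 0 := by nlinarith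
    have h0mem : (0:ℕ) ∈ Finset.range N := Finset.mem_range.mpr hN
    have hx2 : ‖traj A B k x w 0‖ ^ 2 + ‖w 0‖ ^ 2 ≤ Sig :=
      Finset.single_le_sum (f := fun i => ‖traj A B k x w i‖ ^ 2 + ‖w i‖ ^ 2)
        (fun i _ => by positivity) h0mem
    have hxnorm : ‖x‖ = 0 := by
      have hx0 : ‖traj A B k x w 0‖ ^ 2 ≤ 0 := by
        have : (0:ℝ) ≤ ‖w 0‖ ^ 2 := by positivity
        linarith
      have : traj A B k x w 0 = x := rfl
      rw [this] at hx0
      nlinarith [norm_nonneg x, sq_nonneg ‖x‖]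
    have hx : x = 0 := norm_eq_zero.mp hxnorm
    subst hx
    have ht0 : ∀ i, traj A B k 0 (fun _ => (0 : Fin q → ℝ)) i = 0 :=
      fun i => traj_zero A B k _ i (fun _ _ => rfl)
    have hz : cost1 Q R QN Γ A B N k 0 ε (fun _ => 0) = 0 := by
      simp [cost1, ht0, Matrix.mulVec_zero]
    have hu0 : Su ≤ 0 := by
      have h := hu (fun _ => 0)
      rw [hz] at h
      simp only [cost1, hΓ0, zero_div, zero_mul, add_zero] at h
      rw [hSudef]
      exact h
    have hui : ∀ l < N, u l = 0 := by
      intro l hl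
      by_contra hne
      have h1 : 0 < u l ⬝ᵥ R.mulVec (u l) := sd_pos hR hne
      have h2 : traj A B k 0 u l ⬝ᵥ Q.mulVec (traj A B k 0 u l)
          + u l ⬝ᵥ R.mulVec (u l) ≤ Su :=
        Finset.single_le_sum
          (f := fun i => traj A B k 0 u i ⬝ᵥ Q.mulVec (traj A B k 0 u i)
            + u i ⬝ᵥ R.mulVec (u i))
          (fun i _ => add_nonneg (sd_nonneg hQ _) (sd_nonneg hR _))
          (Finset.mem_range.mpr hl)
      nlinarith [sd_nonneg hQ (traj A B k 0 u l)]
    have hN' : traj A B k 0 u N = 0 := traj_zero A B k u N hui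
    rw [hN']
    have hc2 : 0 ≤ cost2 QN A B N k 0 v := sd_nonneg hQN _
    have hρ : (0:ℝ) < M / c + 1 := by positivity
    rw [Matrix.mulVec_zero, dotProduct_zero]
    nlinarith [mul_pos hε hρ]
  · -- main case: Γ x > 0
    have hΓp : 0 < Γ x := lt_of_le_of_ne (hΓ x) (Ne.symm hΓ0)
    have key := hu w
    simp only [cost1] at key
    rw [← hSudef, ← hSwdef] at key
    set T : ℝ := traj A B k x u N ⬝ᵥ QN.mulVec (traj A B k x u N) with hTdef
    set Tw : ℝ := traj A B k x w N ⬝ᵥ QN.mulVec (traj A B k x w N) with hTwdef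
    -- key : Su + Γ x / ε * T ≤ Sw + Γ x / ε * Tw
    have h1 : Γ x / ε * T ≤ Sw + Γ x / ε * Tw := by linarith
    have h2 : Γ x * T ≤ ε * Sw + Γ x * Tw := by
      have h3 := mul_le_mul_of_nonneg_right h1 hε.le
      have e1 : Γ x / ε * T * ε = Γ x * T := by field_simp
      have e2 : (Sw + Γ x / ε * Tw) * ε = ε * Sw + Γ x * Tw := by
        field_simp
      rw [e1, e2] at h3
      exact h3
    have hfin : c * T ≤ c * Tw + ε * M + ε * c := by
      nlinarith [mul_le_mul_of_nonneg_left h2 hc.le,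
        mul_le_mul_of_nonneg_left hSwM (mul_nonneg hε.le hc.le),
        mul_le_mul_of_nonneg_left hwΓ (mul_nonneg hε.le hM0),
        mul_pos (mul_pos hε hΓp) hc, mul_pos hε hΓp]
    have hTweq : cost2 QN A B N k x w = Tw := rfl
    rw [hV2, hTweq]
    have hgoal : c * T ≤ c * (Tw + ε * (M / c + 1)) := by
      have hrc : c * (Tw + ε * (M / c + 1)) = c * Tw + ε * M + ε * c := by
        field_simp; ring
      rw [hrc]; exact hfin
    exact le_of_mul_le_mul_left hgoal hc
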